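/- Let α, β be nonzero algebraic numbers, K ≥ 1, L ≥ 2 integers, and let μ ≤ L−2 be the smallest natural number with δ^μ ℋ(β,α) ≠ 0. Let P = ∏_p |M₀|_p = 1/gcd of the maximal minors of M₀, and define G₁(X,Y) = d_μ^{K−1}·P·ℱ_μ(δ)(ℋ(X,Y)), where ℱ_μ(δ) = δ(δ−1)⋯(δ−μ+1)/μ! (and ℱ₀(δ) = 1, d_0 = 1). Then G₁ has integer coefficients, G₁(β,α) = (d_μ^{K−1}/μ!)·P·δ^μℋ(β,α), and G₁(β,α) ≠ 0. -/

import Mathlib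

open MvPolynomial

/-- The derivation `δ = ∂/∂X + Y ∂/∂Y` on `ℚ[X,Y]` (`X` is variable `0`, `Y` is variable `1`). -/
noncomputable def deltaQ (P : MvPolynomial (Fin 2) ℚ) : MvPolynomial (Fin 2) ℚ :=
  pderiv 0 P + X 1 * pderiv 1 P

/-- The operator `ℱ_μ(δ) = δ(δ−1)⋯(δ−μ+1)/μ!` (with `ℱ₀(δ) = 1`). -/
noncomputable def feldOp (μ : ℕ) (P : MvPolynomial (Fin 2) ℚ) : MvPolynomial (Fin 2) ℚ :=
  (μ.factorial : ℚ)⁻¹ • (List.range μ).foldl (fun Q i => deltaQ Q - (i : ℚ) • Q) P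

/-- The `(s,(k,ℓ))` entry of `M₀`: the `s`-th derivative of `z^k e^{ℓz}` at `0`, namely
`C(s,k) k! ℓ^{s−k}` if `k ≤ s` and `0` otherwise (with `0^0 = 1`). -/
def m0Entry (s k ℓ : ℕ) : ℕ :=
  if k ≤ s then s.choose k * k.factorial * ℓ ^ (s - k) else 0

/-- The `(S−1) × S` integer matrix `M₀` (`S = KL`, written with row type `Fin S'` and column
type `Fin (S'+1)` where `S' + 1 = K*L`); columns indexed by pairs `(k,ℓ)` via
`finProdFinEquiv`. -/
def m0Int (K L S' : ℕ) (h : S' + 1 = K * L) : Matrix (Fin S') (Fin (S' + 1)) ℤ :=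
  Matrix.of fun s j =>
    let kl : Fin K × Fin L := finProdFinEquiv.symm (Fin.cast h j)
    ((m0Entry (s : ℕ) (kl.1 : ℕ) (kl.2 : ℕ) : ℕ) : ℤ)

/-- `Δ_{k,ℓ}`: the maximal minor of `M₀` obtained by deleting the column indexed by `(k,ℓ)`. -/
def m0Minor (K L S' : ℕ) (h : S' + 1 = K * L) (j : Fin (S' + 1)) : ℤ :=
  ((m0Int K L S' h).submatrix id j.succAbove).det

/-- `ℋ(X,Y) ∈ ℚ[X,Y]`: determinant of the `S×S` matrix obtained by appending to `M₀` the row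
`(X^k Y^ℓ)_{k,ℓ}`. -/
noncomputable def HpolyQ (K L S' : ℕ) (h : S' + 1 = K * L) : MvPolynomial (Fin 2) ℚ :=
  Matrix.det (Matrix.of fun i j : Fin (S' + 1) =>
    let kl : Fin K × Fin L := finProdFinEquiv.symm (Fin.cast h j)
    if (i : ℕ) < S' then ((m0Entry (i : ℕ) (kl.1 : ℕ) (kl.2 : ℕ) : ℕ) : MvPolynomial (Fin 2) ℚ)
    else X 0 ^ (kl.1 : ℕ) * X 1 ^ (kl.2 : ℕ))

/-- `d_n = lcm(1, …, n)` (with `d_0 = 1`). -/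
def dlcm (n : ℕ) : ℕ := (Finset.Icc 1 n).lcm id

/-- `G₁(X,Y) = d_μ^{K−1} · P · ℱ_μ(δ)(ℋ(X,Y))` where
`P = ∏_p |M₀|_p = 1/gcd` of the maximal minors of `M₀`. -/
noncomputable def G1 (K L S' : ℕ) (h : S' + 1 = K * L) (μ : ℕ) : MvPolynomial (Fin 2) ℚ :=
  ((dlcm μ : ℚ) ^ (K - 1) * ((Finset.gcd Finset.univ (m0Minor K L S' h) : ℤ) : ℚ)⁻¹) •
    feldOp μ (HpolyQ K L S' h)

lemma dlcm_ne_zero (n : ℕ) : dlcm n ≠ 0 := by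
  intro h
  rw [dlcm, Finset.lcm_eq_zero_iff] at h
  simp [Finset.mem_Icc] at h

lemma dvd_dlcm {i n : ℕ} (h1 : 1 ≤ i) (h2 : i ≤ n) : i ∣ dlcm n :=
  Finset.dvd_lcm (by simp [Finset.mem_Icc]; omega)

lemma dlcm_dvd_dlcm {m n : ℕ} (h : m ≤ n) : dlcm m ∣ dlcm n := by
  apply Finset.lcm_dvd
  intro i hi
  simp [Finset.mem_Icc] at hi
  exact dvd_dlcm hi.1 (hi.2.trans h)

lemma lemA (j ν : ℕ) (hν1 : 1 ≤ ν) (hνj : ν ≤ j) (T : Finset ℕ)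
    (hT : T ⊆ Finset.Icc 1 (j-1)) (hcard : T.card = j - ν) :
    j.factorial ∣ dlcm j ^ ν * ∏ i ∈ T, i := by
  set U := Finset.Icc 1 (j-1) \ T with hU
  have hsplit : (∏ i ∈ T, i) * (∏ i ∈ U, i) = (j-1).factorial := by
    rw [mul_comm, Finset.prod_sdiff hT,
      show Finset.Icc 1 (j-1) = Finset.Ico 1 ((j-1)+1) by rfl]
    exact Finset.prod_Ico_id_eq_factorial _
  have hcardIcc : (Finset.Icc 1 (j-1)).card = j - 1 := by
    rw [Nat.card_Icc]; omega
  have hcardU : U.card = ν - 1 := by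
    rw [hU, Finset.card_sdiff_of_subset hT, hcardIcc, hcard]; omega
  have hUdvd : (∏ i ∈ U, i) ∣ dlcm j ^ (ν - 1) := by
    rw [← hcardU, ← Finset.prod_const]
    apply Finset.prod_dvd_prod_of_dvd
    intro u hu
    have := hT -- u ∈ U means u ∈ Icc
    have hu' : u ∈ Finset.Icc 1 (j-1) := Finset.mem_sdiff.mp hu |>.1
    simp [Finset.mem_Icc] at hu'
    exact dvd_dlcm hu'.1 (by omega)
  have hj : j ∣ dlcm j := dvd_dlcm (by omega) le_rfl
  have : j * ((∏ i ∈ T, i) * (∏ i ∈ U, i)) ∣ dlcm j * ((∏ i ∈ T, i) * dlcm j ^ (ν-1)) :=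
    mul_dvd_mul hj (mul_dvd_mul_left _ hUdvd)
  rw [hsplit] at this
  have hfac : j * (j-1).factorial = j.factorial := Nat.mul_factorial_pred (by omega)
  rw [hfac] at this
  have hpow : dlcm j ^ ν = dlcm j * dlcm j ^ (ν-1) := by
    rw [← pow_succ']
    congr 1
    omega
  have hrw : dlcm j * ((∏ i ∈ T, i) * dlcm j ^ (ν-1)) = dlcm j ^ ν * ∏ i ∈ T, i := by
    rw [hpow]; ring
  rwa [hrw] at this

noncomputable def dpc (j : ℕ) : Polynomial ℤ := ∏ i ∈ Finset.range j, (Polynomial.X - Polynomial.C (i:ℤ))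

noncomputable def qpoly (μ ℓ : ℕ) : Polynomial ℤ := ∏ i ∈ Finset.range μ, (Polynomial.X + Polynomial.C ((ℓ:ℤ) - i))

lemma lemB (j ν : ℕ) : (j.factorial : ℤ) ∣ (dlcm j : ℤ)^ν * (dpc j).coeff ν := by
  rcases Nat.eq_zero_or_pos j with hj | hj
  · subst hj; simp
  rcases Nat.eq_zero_or_pos ν with hν | hν
  · subst hν
    have h0 : (dpc j).coeff 0 = 0 := by
      rw [Polynomial.coeff_zero_eq_eval_zero, dpc, Polynomial.eval_prod]
      apply Finset.prod_eq_zero (Finset.mem_range.mpr hj)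
      simp
    simp [h0]
  rcases le_or_gt ν j with hνj | hνj
  · -- main case via Vieta
    have hcoeff : (dpc j).coeff ν =
        ∑ T ∈ (Finset.range j).powersetCard (j - ν), ∏ i ∈ T, (-(i:ℤ)) := by
      rw [dpc]
      rw [show (∏ i ∈ Finset.range j, (Polynomial.X - Polynomial.C (i:ℤ)))
          = ∏ i ∈ Finset.range j, (Polynomial.X + Polynomial.C (-(i:ℤ))) by
        apply Finset.prod_congr rfl; intro i _; rw [map_neg, sub_eq_add_neg]]
      rw [Finset.prod_X_add_C_coeff _ _ (by simpa using hνj)]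
      simp
    rw [hcoeff, Finset.mul_sum]
    apply Finset.dvd_sum
    intro T hT
    rw [Finset.mem_powersetCard] at hT
    have hprodneg : ∏ i ∈ T, (-(i:ℤ)) = (-1)^T.card * ∏ i ∈ T, (i:ℤ) := by
      rw [show (∏ i ∈ T, (-(i:ℤ))) = ∏ i ∈ T, ((-1) * (i:ℤ)) by
        apply Finset.prod_congr rfl; intros; ring]
      rw [Finset.prod_mul_distrib, Finset.prod_const]
    rcases Decidable.em ((0:ℕ) ∈ T) with h0T | h0T
    · have : ∏ i ∈ T, (i:ℤ) = 0 := Finset.prod_eq_zero h0T (by simp)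
      rw [hprodneg, this]
      simp
    · have hsub : T ⊆ Finset.Icc 1 (j-1) := by
        intro x hx
        have hx1 := hT.1 hx
        simp [Finset.mem_range] at hx1
        simp [Finset.mem_Icc]
        constructor
        · rcases Nat.eq_zero_or_pos x with rfl | h
          · exact absurd hx h0T
          · exact h
        · omega
      have hA := lemA j ν hν hνj T hsub hT.2
      have hA' : (j.factorial : ℤ) ∣ (dlcm j : ℤ)^ν * ∏ i ∈ T, (i:ℤ) := by
        have := Int.natCast_dvd_natCast.mpr hA
        push_cast at this
        exact this
      rw [hprodneg]
      rw [show (dlcm j : ℤ)^ν * ((-1)^T.card * ∏ i ∈ T, (i:ℤ))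
          = (-1)^T.card * ((dlcm j : ℤ)^ν * ∏ i ∈ T, (i:ℤ)) by ring]
      exact hA'.mul_left _
  · -- coeff vanishes above degree
    have hdeg : (dpc j).natDegree = j := by
      rw [dpc, Polynomial.natDegree_prod]
      · rw [Finset.sum_congr rfl (fun (x:ℕ) _ => Polynomial.natDegree_X_sub_C ((x:ℤ)))]
        simp
      · intro i _
        exact Polynomial.X_sub_C_ne_zero _
    have : (dpc j).coeff ν = 0 := Polynomial.coeff_eq_zero_of_natDegree_lt (by omega)
    simp [this]

lemma castDF (n m : ℕ) : ∏ i ∈ Finset.range m, ((n:ℤ) - i) = (n.descFactorial m : ℤ) := by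
  induction m with
  | zero => simp
  | succ m ih =>
    rw [Finset.prod_range_succ, ih, Nat.descFactorial_succ]
    rcases lt_or_ge m n with h | h
    · push_cast [Nat.cast_sub h.le]; ring
    · have h1 : n.descFactorial m * ((n:ℤ) - m) = 0 := by
        rcases eq_or_lt_of_le h with rfl | h2
        · simp
        · have : n.descFactorial m = 0 := Nat.descFactorial_eq_zero_iff_lt.mpr h2
          simp [this]
      rw [h1]
      have : n - m = 0 := by omega
      simp [this]

lemma natVDM (t ℓ μ : ℕ) : (t+ℓ).descFactorial μ =
    ∑ j ∈ Finset.range (μ+1), μ.choose j * (t.descFactorial j * ℓ.descFactorial (μ-j)) := by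
  rw [Nat.descFactorial_eq_factorial_mul_choose, Nat.add_choose_eq, Finset.mul_sum,
    Finset.Nat.sum_antidiagonal_eq_sum_range_succ_mk]
  apply Finset.sum_congr rfl
  intro j hj
  rw [Finset.mem_range] at hj
  have hjμ : j ≤ μ := by omega
  rw [Nat.descFactorial_eq_factorial_mul_choose t, Nat.descFactorial_eq_factorial_mul_choose ℓ,
    ← Nat.choose_mul_factorial_mul_factorial hjμ]
  ring

lemma polyVDM (ℓ μ : ℕ) : qpoly μ ℓ =
    ∑ j ∈ Finset.range (μ+1), Polynomial.C ((μ.choose j : ℤ) * (ℓ.descFactorial (μ-j) : ℤ)) * dpc j := by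
  apply Polynomial.eq_of_infinite_eval_eq
  apply Set.Infinite.mono (s := Set.range (Nat.cast : ℕ → ℤ))
  · rintro _ ⟨t, rfl⟩
    simp only [Set.mem_setOf_eq]
    rw [qpoly, Polynomial.eval_prod, Polynomial.eval_finset_sum]
    have hL : ∏ i ∈ Finset.range μ,Polynomial.eval (t:ℤ) (Polynomial.X + Polynomial.C ((ℓ:ℤ) - i)) = ((t+ℓ).descFactorial μ : ℤ) := by
      rw [← castDF (t+ℓ) μ]
      apply Finset.prod_congr rfl
      intro i _
      push_cast
      simp
      ring
    rw [hL]
    have hR : ∀ j ∈ Finset.range (μ+1),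
       Polynomial.eval (t:ℤ) (Polynomial.C ((μ.choose j : ℤ) * (ℓ.descFactorial (μ-j) : ℤ)) * dpc j)
        = (μ.choose j : ℤ) * ((t.descFactorial j : ℤ) * (ℓ.descFactorial (μ-j) : ℤ)) := by
      intro j _
      rw [Polynomial.eval_mul, Polynomial.eval_C, dpc, Polynomial.eval_prod]
      have : ∏ i ∈ Finset.range j,Polynomial.eval (t:ℤ) (Polynomial.X - Polynomial.C (i:ℤ)) = (t.descFactorial j : ℤ) := by
        rw [← castDF t j]
        apply Finset.prod_congr rfl
        intro i _
        simp
      rw [this]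
      ring
    rw [Finset.sum_congr rfl hR, natVDM t ℓ μ]
    push_cast
    rfl
  · exact Set.infinite_range_of_injective fun a b => by omega

lemma keyDvd (μ k ℓ ν K : ℕ) (hk : k + 1 ≤ K) :
    (μ.factorial : ℤ) ∣ (dlcm μ : ℤ)^(K-1) * ((qpoly μ ℓ).coeff ν * (k.descFactorial ν : ℤ)) := by
  rcases le_or_gt ν k with hνk | hνk
  swap
  · simp [Nat.descFactorial_eq_zero_iff_lt.mpr hνk]
  rw [polyVDM, Polynomial.finset_sum_coeff, Finset.sum_mul, Finset.mul_sum]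
  apply Finset.dvd_sum
  intro j hj
  rw [Finset.mem_range] at hj
  have hjμ : j ≤ μ := by omega
  have hμfac : (μ.factorial : ℤ) = (μ.choose j : ℤ) * (j.factorial : ℤ) * ((μ-j).factorial : ℤ) := by
    rw [← Nat.choose_mul_factorial_mul_factorial hjμ]
    push_cast
    ring
  have h1 : (j.factorial : ℤ) ∣ (dlcm μ : ℤ)^ν * (dpc j).coeff ν := by
    refine (lemB j ν).trans (mul_dvd_mul_right ?_ _)
    exact pow_dvd_pow_of_dvd (Int.natCast_dvd_natCast.mpr (dlcm_dvd_dlcm hjμ)) ν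
  have h2 : ((μ-j).factorial : ℤ) ∣ (ℓ.descFactorial (μ-j) : ℤ) :=
    Int.natCast_dvd_natCast.mpr (Nat.factorial_dvd_descFactorial _ _)
  have h3 : (μ.factorial : ℤ) ∣
      (μ.choose j : ℤ) * ((dlcm μ : ℤ)^ν * (dpc j).coeff ν) * (ℓ.descFactorial (μ-j) : ℤ) := by
    rw [hμfac]
    exact mul_dvd_mul (mul_dvd_mul dvd_rfl h1) h2
  have hsplit : (dlcm μ : ℤ)^(K-1) = (dlcm μ : ℤ)^ν * (dlcm μ : ℤ)^(K-1-ν) := by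
    rw [← pow_add]
    congr 1
    omega
  have heq : (dlcm μ : ℤ)^(K-1) *
      ((Polynomial.C ((μ.choose j : ℤ) * (ℓ.descFactorial (μ-j) : ℤ)) * dpc j).coeff ν
        * (k.descFactorial ν : ℤ))
      = ((μ.choose j : ℤ) * ((dlcm μ : ℤ)^ν * (dpc j).coeff ν) * (ℓ.descFactorial (μ-j) : ℤ))
        * ((dlcm μ : ℤ)^(K-1-ν) * (k.descFactorial ν : ℤ)) := by
    rw [Polynomial.coeff_C_mul, hsplit]
    ring
  rw [heq]
  exact dvd_mul_of_dvd_left h3 _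

noncomputable def foldD (μ : ℕ) (P : MvPolynomial (Fin 2) ℚ) : MvPolynomial (Fin 2) ℚ :=
  (List.range μ).foldl (fun Q i => deltaQ Q - (i : ℚ) • Q) P

lemma feldOp_eq (μ : ℕ) (P : MvPolynomial (Fin 2) ℚ) :
    feldOp μ P = (μ.factorial : ℚ)⁻¹ • foldD μ P := rfl

lemma foldD_zero (P : MvPolynomial (Fin 2) ℚ) : foldD 0 P = P := rfl

lemma foldD_succ (μ : ℕ) (P : MvPolynomial (Fin 2) ℚ) :
    foldD (μ+1) P = deltaQ (foldD μ P) - (μ : ℚ) • foldD μ P := by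
  simp [foldD, List.range_succ]

lemma deltaQ_add (P Q : MvPolynomial (Fin 2) ℚ) : deltaQ (P + Q) = deltaQ P + deltaQ Q := by
  simp [deltaQ, mul_add]
  ring

lemma deltaQ_smul (c : ℚ) (P : MvPolynomial (Fin 2) ℚ) : deltaQ (c • P) = c • deltaQ P := by
  simp [deltaQ, smul_add, mul_smul_comm]

lemma foldD_add (μ : ℕ) (P Q : MvPolynomial (Fin 2) ℚ) :
    foldD μ (P + Q) = foldD μ P + foldD μ Q := by
  induction μ with
  | zero => rfl
  | succ μ ih =>
    rw [foldD_succ, foldD_succ, foldD_succ, ih, deltaQ_add, smul_add]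
    ring

lemma foldD_smul (μ : ℕ) (c : ℚ) (P : MvPolynomial (Fin 2) ℚ) :
    foldD μ (c • P) = c • foldD μ P := by
  induction μ with
  | zero => rfl
  | succ μ ih =>
    rw [foldD_succ, foldD_succ, ih, deltaQ_smul, smul_comm (μ:ℚ) c]
    rw [smul_sub]

noncomputable def foldLM (μ : ℕ) : MvPolynomial (Fin 2) ℚ →ₗ[ℚ] MvPolynomial (Fin 2) ℚ where
  toFun := foldD μ
  map_add' := foldD_add μ
  map_smul' := foldD_smul μ

lemma deltaQ_mono (a b : ℕ) :
    deltaQ (X 0 ^ a * X 1 ^ b) =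
      (a : ℚ) • (X 0 ^ (a-1) * X 1 ^ b) + (b : ℚ) • (X 0 ^ a * X 1 ^ b) := by
  have h01 : (1 : Fin 2) ≠ 0 := by decide
  have h10 : (0 : Fin 2) ≠ 1 := by decide
  rw [deltaQ, pderiv_mul, pderiv_mul, pderiv_pow, pderiv_pow, pderiv_pow, pderiv_pow,
    pderiv_X_self, pderiv_X_self, pderiv_X_of_ne h01, pderiv_X_of_ne h10]
  rw [smul_eq_C_mul, smul_eq_C_mul, map_natCast C a, map_natCast C b]
  rcases b with _ | b
  · simp
    try ring
  · rcases a with _ | a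
    · simp [pow_succ]
      try ring
    · simp [pow_succ]
      try ring

noncomputable def deltaLM : MvPolynomial (Fin 2) ℚ →ₗ[ℚ] MvPolynomial (Fin 2) ℚ where
  toFun := deltaQ
  map_add' := deltaQ_add
  map_smul' := deltaQ_smul

lemma foldD_mono (μ k ℓ : ℕ) :
    foldD μ (X 0 ^ k * X 1 ^ ℓ) =
      ∑ ν ∈ Finset.range (k+1),
        (((qpoly μ ℓ).coeff ν * (k.descFactorial ν : ℤ) : ℤ) : ℚ) •
          (X 0 ^ (k-ν) * X 1 ^ ℓ) := by
  set m : ℕ → MvPolynomial (Fin 2) ℚ := fun ν => X 0 ^ (k-ν) * X 1 ^ ℓ with hm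
  induction μ with
  | zero =>
    rw [foldD_zero, Finset.sum_eq_single 0]
    · simp [qpoly, m]
    · intro ν _ hν
      have : (qpoly 0 ℓ).coeff ν = 0 := by
        simp [qpoly, Polynomial.coeff_one, hν]
      simp only [this, zero_mul, Int.cast_zero, zero_smul]
    · intro h0
      exact absurd (Finset.mem_range.mpr (Nat.succ_pos k)) h0
  | succ μ ih =>
    have hq : qpoly (μ+1) ℓ = qpoly μ ℓ * Polynomial.X
        + qpoly μ ℓ * Polynomial.C ((ℓ:ℤ) - μ) := by
      rw [qpoly, Finset.prod_range_succ, mul_add]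
      rfl
    set c : ℕ → ℚ := fun ν => (((qpoly μ ℓ).coeff ν * (k.descFactorial ν : ℤ) : ℤ) : ℚ) with hc
    set A : ℕ → ℚ := fun ν => c ν * ((k-ν : ℕ) : ℚ) with hA
    rw [foldD_succ, ih]
    have hdel : deltaQ (∑ ν ∈ Finset.range (k+1), c ν • m ν)
        = ∑ ν ∈ Finset.range (k+1), c ν • deltaQ (m ν) := by
      rw [show deltaQ (∑ ν ∈ Finset.range (k+1), c ν • m ν)
          = deltaLM (∑ ν ∈ Finset.range (k+1), c ν • m ν) from rfl, map_sum]
      apply Finset.sum_congr rfl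
      intro ν _
      rw [map_smul]
      rfl
    rw [hdel]
    have hdm : ∀ ν, c ν • deltaQ (m ν) = A ν • m (ν+1) + (c ν * (ℓ:ℚ)) • m ν := by
      intro ν
      have : deltaQ (m ν) = ((k-ν : ℕ) : ℚ) • m (ν+1) + (ℓ:ℚ) • m ν := by
        rw [hm]
        simp only []
        rw [deltaQ_mono (k-ν) ℓ, Nat.sub_sub]
      rw [this, smul_add, smul_smul, smul_smul, hA]
    rw [Finset.sum_congr rfl (fun ν _ => hdm ν), Finset.sum_add_distrib]
    have hshift : ∑ ν ∈ Finset.range (k+1), A ν • m (ν+1)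
        = ∑ ν ∈ Finset.range (k+1), (if ν = 0 then (0:ℚ) else A (ν-1)) • m ν := by
      rw [Finset.sum_range_succ, Finset.sum_range_succ' (fun ν => (if ν = 0 then (0:ℚ) else A (ν-1)) • m ν) k]
      have hAk : A k = 0 := by simp [hA]
      simp [hAk]
    rw [hshift, Finset.smul_sum, ← Finset.sum_add_distrib, ← Finset.sum_sub_distrib]
    apply Finset.sum_congr rfl
    intro ν hν
    rw [Finset.mem_range] at hν
    have hcomb : (if ν = 0 then (0:ℚ) else A (ν-1)) • m ν + (c ν * (ℓ:ℚ)) • m ν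
        - (μ:ℚ) • c ν • m ν
        = ((if ν = 0 then (0:ℚ) else A (ν-1)) + c ν * ((ℓ:ℚ) - μ)) • m ν := by
      rw [smul_smul, ← add_smul, ← sub_smul]
      congr 1
      ring
    rw [hcomb]
    congr 1
    rcases ν with _ | ν'
    · simp only [if_pos rfl, zero_add, hc, hq]
      rw [Polynomial.coeff_add, Polynomial.coeff_mul_C]
      rw [Polynomial.mul_coeff_zero, Polynomial.coeff_X_zero]
      push_cast
      ring
    · rw [if_neg (Nat.succ_ne_zero _)]
      simp only [Nat.add_sub_cancel]
      rw [hA, hc, hq]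
      rw [Polynomial.coeff_add, Polynomial.coeff_mul_C, Polynomial.coeff_mul_X]
      have hdf : k.descFactorial (ν'+1) = (k - ν') * k.descFactorial ν' :=
        Nat.descFactorial_succ k ν'
      push_cast [hdf]
      ring

lemma foldRep (μ : ℕ) (P : MvPolynomial (Fin 2) ℚ) :
    ∃ c : ℕ → ℚ, foldD μ P = deltaQ^[μ] P + ∑ j ∈ Finset.range μ, c j • deltaQ^[j] P := by
  induction μ with
  | zero => exact ⟨fun _ => 0, by simp [foldD_zero]⟩
  | succ μ ih =>
    obtain ⟨c, hc⟩ := ih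
    refine ⟨fun j => (if j = 0 then 0 else c (j-1)) + (if j = μ then -(μ:ℚ) else -(μ:ℚ) * c j), ?_⟩
    rw [foldD_succ, hc, deltaQ_add]
    have hds : deltaQ (∑ j ∈ Finset.range μ, c j • deltaQ^[j] P)
        = ∑ j ∈ Finset.range μ, c j • deltaQ^[j+1] P := by
      rw [show deltaQ (∑ j ∈ Finset.range μ, c j • deltaQ^[j] P)
          = deltaLM (∑ j ∈ Finset.range μ, c j • deltaQ^[j] P) from rfl, map_sum]
      apply Finset.sum_congr rfl
      intro j _
      rw [map_smul]
      rw [Function.iterate_succ_apply']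
      rfl
    rw [hds]
    have hsplit : ∑ j ∈ Finset.range (μ+1),
        ((if j = 0 then (0:ℚ) else c (j-1)) + (if j = μ then -(μ:ℚ) else -(μ:ℚ) * c j)) • deltaQ^[j] P
        = (∑ j ∈ Finset.range (μ+1), (if j = 0 then (0:ℚ) else c (j-1)) • deltaQ^[j] P)
          + ∑ j ∈ Finset.range (μ+1), (if j = μ then -(μ:ℚ) else -(μ:ℚ) * c j) • deltaQ^[j] P := by
      rw [← Finset.sum_add_distrib]
      apply Finset.sum_congr rfl
      intro j _
      rw [add_smul]
    have h1 : ∑ j ∈ Finset.range (μ+1), (if j = 0 then (0:ℚ) else c (j-1)) • deltaQ^[j] P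
        = ∑ j ∈ Finset.range μ, c j • deltaQ^[j+1] P := by
      rw [Finset.sum_range_succ']
      simp
    have h2 : ∑ j ∈ Finset.range (μ+1), (if j = μ then -(μ:ℚ) else -(μ:ℚ) * c j) • deltaQ^[j] P
        = -((μ:ℚ) • deltaQ^[μ] P) + ∑ j ∈ Finset.range μ, (-(μ:ℚ) * c j) • deltaQ^[j] P := by
      rw [Finset.sum_range_succ, if_pos rfl]
      have : ∀ j ∈ Finset.range μ, (if j = μ then -(μ:ℚ) else -(μ:ℚ) * c j) • deltaQ^[j] P
          = (-(μ:ℚ) * c j) • deltaQ^[j] P := by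
        intro j hj
        rw [Finset.mem_range] at hj
        rw [if_neg (by omega)]
      rw [Finset.sum_congr rfl this]
      rw [neg_smul]
      ring
    rw [hsplit, h1, h2, Function.iterate_succ_apply']
    have : ∀ j ∈ Finset.range μ, (-(μ:ℚ) * c j) • deltaQ^[j] P = -((μ:ℚ) • (c j • deltaQ^[j] P)) := by
      intro j _
      rw [smul_smul, neg_mul, neg_smul]
    rw [Finset.sum_congr rfl this, Finset.sum_neg_distrib, smul_add, Finset.smul_sum]
    ring

lemma Hexpand (K L S' : ℕ) (h : S' + 1 = K * L) :
    HpolyQ K L S' h = ∑ j : Fin (S'+1),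
      ((((-1:ℤ)^(S'+(j:ℕ)) * m0Minor K L S' h j : ℤ) : ℚ)) •
        (X 0 ^ ((finProdFinEquiv.symm (Fin.cast h j)).1 : ℕ) *
         X 1 ^ ((finProdFinEquiv.symm (Fin.cast h j)).2 : ℕ)) := by
  rw [HpolyQ, Matrix.det_succ_row _ (Fin.last S')]
  apply Finset.sum_congr rfl
  intro j _
  set f : ℤ →+* MvPolynomial (Fin 2) ℚ := Int.castRingHom _ with hf
  have hsub : (Matrix.of fun i j : Fin (S' + 1) =>
      let kl : Fin K × Fin L := finProdFinEquiv.symm (Fin.cast h j)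
      if (i : ℕ) < S' then ((m0Entry (i : ℕ) (kl.1 : ℕ) (kl.2 : ℕ) : ℕ) : MvPolynomial (Fin 2) ℚ)
      else X 0 ^ (kl.1 : ℕ) * X 1 ^ (kl.2 : ℕ)).submatrix (Fin.last S').succAbove j.succAbove
      = (((m0Int K L S' h).submatrix id j.succAbove).map f) := by
    funext s t
    simp only [Matrix.submatrix_apply, Matrix.map_apply, Matrix.of_apply, Fin.succAbove_last,
      m0Int, id]
    rw [if_pos (by simpa using s.isLt)]
    push_cast
    rfl
  rw [hsub]
  have hdet : (((m0Int K L S' h).submatrix id j.succAbove).map f).det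
      = f (m0Minor K L S' h j) := (RingHom.map_det f _).symm
  rw [hdet]
  have hlast : (Matrix.of fun i j : Fin (S' + 1) =>
      let kl : Fin K × Fin L := finProdFinEquiv.symm (Fin.cast h j)
      if (i : ℕ) < S' then ((m0Entry (i : ℕ) (kl.1 : ℕ) (kl.2 : ℕ) : ℕ) : MvPolynomial (Fin 2) ℚ)
      else X 0 ^ (kl.1 : ℕ) * X 1 ^ (kl.2 : ℕ)) (Fin.last S') j
      = X 0 ^ ((finProdFinEquiv.symm (Fin.cast h j)).1 : ℕ)
        * X 1 ^ ((finProdFinEquiv.symm (Fin.cast h j)).2 : ℕ) := by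
    simp only [Matrix.of_apply, Fin.val_last]
    rw [if_neg (lt_irrefl S')]
  rw [hlast, smul_eq_C_mul, Fin.val_last]
  simp only [map_mul, map_pow, map_neg, map_one, map_intCast, eq_intCast]
  push_cast
  ring

theorem stmt17 (K L : ℕ) (hK : 1 ≤ K) (hL : 2 ≤ L) (S' : ℕ) (h : S' + 1 = K * L)
    (α β : ℂ) (hαalg : IsAlgebraic ℚ α) (hβalg : IsAlgebraic ℚ β) (hα : α ≠ 0) (hβ : β ≠ 0)
    (μ : ℕ) (hμL : μ ≤ L - 2)
    (hμne : aeval ![β, α] (deltaQ^[μ] (HpolyQ K L S' h)) ≠ 0)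
    (hμmin : ∀ j < μ, aeval ![β, α] (deltaQ^[j] (HpolyQ K L S' h)) = 0) :
    (∃ g : MvPolynomial (Fin 2) ℤ, map (Int.castRingHom ℚ) g = G1 K L S' h μ) ∧
    aeval ![β, α] (G1 K L S' h μ) =
      ((dlcm μ : ℂ) ^ (K - 1) / (μ.factorial : ℂ)) *
        ((Finset.gcd Finset.univ (m0Minor K L S' h) : ℤ) : ℂ)⁻¹ *
        aeval ![β, α] (deltaQ^[μ] (HpolyQ K L S' h)) ∧
    aeval ![β, α] (G1 K L S' h μ) ≠ 0 := by
  have hδ0 : deltaQ 0 = 0 := by simp [deltaQ]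
  set g : ℤ := Finset.gcd Finset.univ (m0Minor K L S' h) with hgdef
  -- g ≠ 0
  have hgne : g ≠ 0 := by
    intro hg0
    have hall : ∀ j ∈ (Finset.univ : Finset (Fin (S'+1))), m0Minor K L S' h j = 0 :=
      Finset.gcd_eq_zero_iff.mp hg0
    have hH0 : HpolyQ K L S' h = 0 := by
      rw [Hexpand]
      apply Finset.sum_eq_zero
      intro j _
      rw [hall j (Finset.mem_univ j), mul_zero]
      simp
    apply hμne
    rw [hH0, Function.iterate_fixed hδ0, map_zero]
  have hgq : ((g:ℤ):ℚ) ≠ 0 := Int.cast_ne_zero.mpr hgne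
  have hfq : ((μ.factorial : ℕ):ℚ) ≠ 0 := Nat.cast_ne_zero.mpr μ.factorial_ne_zero
  have hdq : ((dlcm μ : ℕ):ℚ) ≠ 0 := Nat.cast_ne_zero.mpr (dlcm_ne_zero μ)
  -- value of foldD at the point
  have hval : aeval ![β, α] (foldD μ (HpolyQ K L S' h))
      = aeval ![β, α] (deltaQ^[μ] (HpolyQ K L S' h)) := by
    obtain ⟨c, hc⟩ := foldRep μ (HpolyQ K L S' h)
    rw [hc, map_add, map_sum]
    have : ∀ j ∈ Finset.range μ,
        aeval ![β, α] (c j • deltaQ^[j] (HpolyQ K L S' h)) = 0 := by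
      intro j hj
      rw [Finset.mem_range] at hj
      rw [map_smul, hμmin j hj, smul_zero]
    rw [Finset.sum_congr rfl this]
    simp
  -- value of G1
  have hG1val : aeval ![β, α] (G1 K L S' h μ)
      = (((dlcm μ : ℚ) ^ (K - 1) * ((g:ℤ):ℚ)⁻¹) * ((μ.factorial : ℕ):ℚ)⁻¹)
        • aeval ![β, α] (deltaQ^[μ] (HpolyQ K L S' h)) := by
    rw [G1, feldOp_eq, map_smul, map_smul, hval, smul_smul]
  have hpart2 : aeval ![β, α] (G1 K L S' h μ) =
      ((dlcm μ : ℂ) ^ (K - 1) / (μ.factorial : ℂ)) * (((g:ℤ)) : ℂ)⁻¹ *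
        aeval ![β, α] (deltaQ^[μ] (HpolyQ K L S' h)) := by
    rw [hG1val, Rat.smul_def]
    push_cast
    ring
  refine ⟨?_, hpart2, ?_⟩
  swap
  · rw [hpart2]
    apply mul_ne_zero
    apply mul_ne_zero
    · apply div_ne_zero
      · exact pow_ne_zero _ (Nat.cast_ne_zero.mpr (dlcm_ne_zero μ))
      · exact Nat.cast_ne_zero.mpr μ.factorial_ne_zero
    · exact inv_ne_zero (Int.cast_ne_zero.mpr hgne)
    · exact hμne
  -- integrality
  · set qs : ℚ := ((dlcm μ : ℚ) ^ (K - 1) * ((g:ℤ):ℚ)⁻¹) * ((μ.factorial : ℕ):ℚ)⁻¹ with hqs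
    have hG1eq : G1 K L S' h μ = ∑ j : Fin (S'+1),
        ∑ ν ∈ Finset.range (((finProdFinEquiv.symm (Fin.cast h j)).1 : ℕ) + 1),
          (qs * ((((-1:ℤ)^(S'+(j:ℕ)) * m0Minor K L S' h j : ℤ) : ℚ)
            * (((qpoly μ ((finProdFinEquiv.symm (Fin.cast h j)).2 : ℕ)).coeff ν
                * (((finProdFinEquiv.symm (Fin.cast h j)).1 : ℕ).descFactorial ν : ℤ) : ℤ) : ℚ)))
          • (X 0 ^ (((finProdFinEquiv.symm (Fin.cast h j)).1 : ℕ) - ν)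
             * X 1 ^ ((finProdFinEquiv.symm (Fin.cast h j)).2 : ℕ)) := by
      rw [G1, feldOp_eq, smul_smul, ← hgdef, ← hqs]
      have hfold : foldD μ (HpolyQ K L S' h) = ∑ j : Fin (S'+1),
          ∑ ν ∈ Finset.range (((finProdFinEquiv.symm (Fin.cast h j)).1 : ℕ) + 1),
            (((((-1:ℤ)^(S'+(j:ℕ)) * m0Minor K L S' h j : ℤ) : ℚ))
              * (((qpoly μ ((finProdFinEquiv.symm (Fin.cast h j)).2 : ℕ)).coeff ν
                  * (((finProdFinEquiv.symm (Fin.cast h j)).1 : ℕ).descFactorial ν : ℤ) : ℤ) : ℚ))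
            • (X 0 ^ (((finProdFinEquiv.symm (Fin.cast h j)).1 : ℕ) - ν)
               * X 1 ^ ((finProdFinEquiv.symm (Fin.cast h j)).2 : ℕ)) := by
        rw [Hexpand]
        rw [show foldD μ _ = foldLM μ _ from rfl, map_sum]
        apply Finset.sum_congr rfl
        intro j _
        rw [show (foldLM μ) _ = foldD μ _ from rfl]
        rw [foldD_smul, foldD_mono, Finset.smul_sum]
        apply Finset.sum_congr rfl
        intro ν _
        rw [smul_smul]
      rw [hfold, Finset.smul_sum]
      apply Finset.sum_congr rfl
      intro j _
      rw [Finset.smul_sum]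
      apply Finset.sum_congr rfl
      intro ν _
      rw [smul_smul]
    rw [hG1eq]
    apply RingHom.mem_range.mp
    apply Subring.sum_mem
    intro j _
    apply Subring.sum_mem
    intro ν _
    -- per-term integrality
    set kk : ℕ := ((finProdFinEquiv.symm (Fin.cast h j)).1 : ℕ) with hkk
    set ll : ℕ := ((finProdFinEquiv.symm (Fin.cast h j)).2 : ℕ) with hll
    obtain ⟨e, he⟩ : g ∣ m0Minor K L S' h j := hgdef ▸ Finset.gcd_dvd (Finset.mem_univ j)
    obtain ⟨w, hw⟩ := keyDvd μ kk ll ν K ((finProdFinEquiv.symm (Fin.cast h j)).1).isLt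
    set z : ℤ := (-1:ℤ)^(S'+(j:ℕ)) * e * w with hz
    have hscal : qs * ((((-1:ℤ)^(S'+(j:ℕ)) * m0Minor K L S' h j : ℤ) : ℚ)
        * (((qpoly μ ll).coeff ν * (kk.descFactorial ν : ℤ) : ℤ) : ℚ))
        = ((z:ℤ):ℚ) := by
      have he' : ((m0Minor K L S' h j : ℤ):ℚ) = ((g:ℤ):ℚ) * ((e:ℤ):ℚ) := by
        rw [he]; push_cast; ring
      have hw' : ((dlcm μ : ℕ):ℚ)^(K-1)
          * ((((qpoly μ ll).coeff ν : ℤ):ℚ) * ((kk.descFactorial ν : ℕ):ℚ))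
          = ((μ.factorial : ℕ):ℚ) * ((w:ℤ):ℚ) := by
        exact_mod_cast congrArg (fun t : ℤ => (t:ℚ)) hw
      rw [hqs, hz]
      push_cast [he]
      field_simp
      linear_combination ((e:ℤ):ℚ) * hw'
    rw [hscal, smul_eq_C_mul]
    refine ⟨C z * (X 0 ^ (kk - ν) * X 1 ^ ll), ?_⟩
    simp only [map_mul, map_pow, MvPolynomial.map_C, MvPolynomial.map_X, eq_intCast,
      map_intCast]
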